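/- arXiv:math/0511486 — 4 statements merged into one kernel-verified Lean document; each statement's English description precedes it below -/
import Mathlib

section
/- Let n ≥ 2, let f be a nonzero formal power series in ℂ[[x₁,…,xₙ]], and let w = (0, w₂, …, wₙ) ∈ ℝⁿ with wᵢ > 0 for all i ≠ 1. Then the minimum of w·α over α ∈ Supp(f) is attained at two or more distinct elements of Supp(f) if and only if the minimum of w·β over β ∈ E₁(f) is attained at two or more distinct elements of E₁(f). -/
/-- The support of a multivariate formal power series. -/
def Supp {n : ℕ} (f : MvPowerSeries (Fin n) ℂ) : Set (Fin n →₀ ℕ) :=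
  {α | MvPowerSeries.coeff α f ≠ 0}

/-- The `w`-weight of an exponent vector `α`, namely `w·α = Σᵢ wᵢ αᵢ`. -/
def wt {n : ℕ} (w : Fin n → ℝ) (α : Fin n →₀ ℕ) : ℝ :=
  ∑ i, w i * (α i : ℝ)

/-- The projection `π : ℕⁿ → ℕⁿ⁻¹` forgetting the first coordinate (realized as the
restriction to the indices `i ≠ 0`). -/
def proj1 {n : ℕ} (α : Fin (n + 2) →₀ ℕ) : {i : Fin (n + 2) // i ≠ 0} → ℕ :=
  fun i => α i.1

/-- `E₁(f) = {α ∈ Supp f : π(α) is a minimal element of π(Supp f)}`, with respect to the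
componentwise partial order. -/
def E1 {n : ℕ} (f : MvPowerSeries (Fin (n + 2)) ℂ) : Set (Fin (n + 2) →₀ ℕ) :=
  {α ∈ Supp f | ∀ β ∈ Supp f, proj1 β ≤ proj1 α → proj1 β = proj1 α}

/-- The minimum of `w·α` over `α ∈ S` is attained at two or more distinct elements of `S`. -/
def MinAttainedTwice {n : ℕ} (w : Fin n → ℝ) (S : Set (Fin n →₀ ℕ)) : Prop :=
  ∃ a ∈ S, ∃ b ∈ S, a ≠ b ∧ wt w a = wt w b ∧ ∀ c ∈ S, wt w a ≤ wt w c

section Aux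

variable {n : ℕ} {w : Fin (n + 2) → ℝ}

lemma wt_mono_aux (hw0 : w 0 = 0) (hw : ∀ i : Fin (n + 2), i ≠ 0 → 0 < w i)
    {α β : Fin (n + 2) →₀ ℕ} (h : proj1 β ≤ proj1 α) : wt w β ≤ wt w α := by
  apply Finset.sum_le_sum
  intro i _
  by_cases hi : i = 0
  · subst hi; simp [hw0]
  · exact mul_le_mul_of_nonneg_left (by exact_mod_cast h ⟨i, hi⟩) (hw i hi).le

lemma wt_lt_aux (hw0 : w 0 = 0) (hw : ∀ i : Fin (n + 2), i ≠ 0 → 0 < w i)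
    {α β : Fin (n + 2) →₀ ℕ} (h : proj1 β ≤ proj1 α) (hne : proj1 β ≠ proj1 α) :
    wt w β < wt w α := by
  obtain ⟨j, hj⟩ : ∃ j : {i : Fin (n + 2) // i ≠ 0}, β j.1 < α j.1 := by
    by_contra hc
    push_neg at hc
    exact hne (funext fun j => le_antisymm (h j) (hc j))
  apply Finset.sum_lt_sum
  · intro i _
    by_cases hi : i = 0
    · subst hi; simp [hw0]
    · exact mul_le_mul_of_nonneg_left (by exact_mod_cast h ⟨i, hi⟩) (hw i hi).le
  · exact ⟨j.1, Finset.mem_univ _,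
      mul_lt_mul_of_pos_left (by exact_mod_cast hj) (hw j.1 j.2)⟩

lemma exists_E1_le {f : MvPowerSeries (Fin (n + 2)) ℂ} :
    ∀ N : ℕ, ∀ c ∈ Supp f, (∑ i : {i : Fin (n + 2) // i ≠ 0}, c i.1) ≤ N →
      ∃ d ∈ E1 f, proj1 d ≤ proj1 c := by
  intro N
  induction N using Nat.strong_induction_on with
  | _ N ih =>
    intro c hc hN
    by_cases hcE : c ∈ E1 f
    · exact ⟨c, hcE, le_refl _⟩
    · have : ∃ β ∈ Supp f, proj1 β ≤ proj1 c ∧ proj1 β ≠ proj1 c := by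
        by_contra h
        push_neg at h
        exact hcE ⟨hc, fun β hβ hle => h β hβ hle⟩
      obtain ⟨β, hβ, hle, hne⟩ := this
      obtain ⟨j, hj⟩ : ∃ j : {i : Fin (n + 2) // i ≠ 0}, β j.1 < c j.1 := by
        by_contra hcon
        push_neg at hcon
        exact hne (funext fun j => le_antisymm (hle j) (hcon j))
      have hsum : (∑ i : {i : Fin (n + 2) // i ≠ 0}, β i.1) <
          (∑ i : {i : Fin (n + 2) // i ≠ 0}, c i.1) := by
        apply Finset.sum_lt_sum
        · intro i _; exact hle i
        · exact ⟨j, Finset.mem_univ _, hj⟩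
      obtain ⟨d, hd, hdle⟩ := ih (∑ i : {i : Fin (n + 2) // i ≠ 0}, β i.1)
        (lt_of_lt_of_le hsum hN) β hβ le_rfl
      exact ⟨d, hd, le_trans hdle hle⟩

lemma min_mem_E1 {f : MvPowerSeries (Fin (n + 2)) ℂ}
    (hw0 : w 0 = 0) (hw : ∀ i : Fin (n + 2), i ≠ 0 → 0 < w i)
    {a : Fin (n + 2) →₀ ℕ} (ha : a ∈ Supp f) (hmin : ∀ c ∈ Supp f, wt w a ≤ wt w c) :
    a ∈ E1 f := by
  refine ⟨ha, fun β hβ hle => ?_⟩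
  by_contra hne
  exact absurd (hmin β hβ) (not_le.mpr (wt_lt_aux hw0 hw hle hne))

end Aux

/-- For `n ≥ 2`, a nonzero `f ∈ ℂ[[x₁,…,xₙ]]` and `w = (0, w₂, …, wₙ)` with `wᵢ > 0` for
`i ≠ 1`: the minimum of `w·α` over `Supp f` is attained at two or more distinct elements
of `Supp f` iff the minimum of `w·β` over `E₁(f)` is attained at two or more distinct
elements of `E₁(f)`. -/
theorem minAttainedTwice_supp_iff_E1
    (n : ℕ) (f : MvPowerSeries (Fin (n + 2)) ℂ) (hf : f ≠ 0)
    (w : Fin (n + 2) → ℝ) (hw0 : w 0 = 0) (hw : ∀ i : Fin (n + 2), i ≠ 0 → 0 < w i) :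
    MinAttainedTwice w (Supp f) ↔ MinAttainedTwice w (E1 f) := by
  constructor
  · rintro ⟨a, ha, b, hb, hab, heq, hmin⟩
    have hminb : ∀ c ∈ Supp f, wt w b ≤ wt w c := fun c hc => heq ▸ hmin c hc
    exact ⟨a, min_mem_E1 hw0 hw ha hmin, b, min_mem_E1 hw0 hw hb hminb, hab, heq,
      fun c hc => hmin c hc.1⟩
  · rintro ⟨a, ha, b, hb, hab, heq, hmin⟩
    refine ⟨a, ha.1, b, hb.1, hab, heq, fun c hc => ?_⟩
    obtain ⟨d, hd, hdle⟩ := exists_E1_le _ c hc le_rfl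
    exact le_trans (hmin d hd) (wt_mono_aux hw0 hw hdle)
end

section
/- Let n ≥ 2, let f be a nonzero formal power series in ℂ[[x₁,…,xₙ]], and let A ⊆ E₁(f) be a subset such that for every β ∈ π(E₁(f)), writing F_β = E₁(f) ∩ π⁻¹(β) for the fiber over β: A ∩ F_β is nonempty, and if F_β has at least two elements then A ∩ F_β has at least two elements. Then for every w = (0, w₂, …, wₙ) ∈ ℝⁿ with wᵢ > 0 for all i ≠ 1, the minimum of w·α over α ∈ E₁(f) is attained at two or more distinct elements of E₁(f) if and only if the minimum of w·α over α ∈ A is attained at two or more distinct elements of A. -/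
/-- The fiber of `E₁(f)` over `β ∈ π(E₁(f))`. -/
def fiber1 {n : ℕ} (f : MvPowerSeries (Fin (n + 2)) ℂ)
    (β : {i : Fin (n + 2) // i ≠ 0} → ℕ) : Set (Fin (n + 2) →₀ ℕ) :=
  {α ∈ E1 f | proj1 α = β}

/-- Let `A ⊆ E₁(f)` meet every fiber of `π` over `π(E₁(f))`, in at least two points whenever
the fiber has at least two points. Then for every `w = (0, w₂, …, wₙ)` with `wᵢ > 0` for
`i ≠ 1`, the minimum of `w·α` over `E₁(f)` is attained at two or more distinct elements of
`E₁(f)` iff the minimum of `w·α` over `A` is attained at two or more distinct elements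
of `A`. -/
theorem minAttainedTwice_E1_iff_A
    (n : ℕ) (f : MvPowerSeries (Fin (n + 2)) ℂ) (hf : f ≠ 0)
    (A : Set (Fin (n + 2) →₀ ℕ)) (hA : A ⊆ E1 f)
    (hne : ∀ β ∈ proj1 '' E1 f, (A ∩ fiber1 f β).Nonempty)
    (htwo : ∀ β ∈ proj1 '' E1 f, (fiber1 f β).Nontrivial → (A ∩ fiber1 f β).Nontrivial) :
    ∀ w : Fin (n + 2) → ℝ, w 0 = 0 → (∀ i : Fin (n + 2), i ≠ 0 → 0 < w i) →
      (MinAttainedTwice w (E1 f) ↔ MinAttainedTwice w A) := by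
  intro w hw0 _
  have hwt : ∀ α β : Fin (n + 2) →₀ ℕ, proj1 α = proj1 β → wt w α = wt w β := by
    intro α β hp
    unfold wt
    refine Finset.sum_congr rfl fun i _ => ?_
    by_cases h : i = 0
    · subst h; simp [hw0]
    · have := congrFun hp ⟨i, h⟩
      simp only [proj1] at this
      rw [this]
  constructor
  · rintro ⟨a, ha, b, hb, hab, hwab, hmin⟩
    by_cases hp : proj1 a = proj1 b
    · -- same fiber: fiber is nontrivial
      obtain ⟨a', ha'A, b', hb'A, hab'⟩ :=
        htwo (proj1 a) ⟨a, ha, rfl⟩ ⟨a, ⟨ha, rfl⟩, b, ⟨hb, hp.symm⟩, hab⟩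
      refine ⟨a', ha'A.1, b', hb'A.1, hab', ?_, ?_⟩
      · rw [hwt a' a ha'A.2.2, hwt b' a (hb'A.2.2.trans rfl)]
      · intro c hc
        rw [hwt a' a ha'A.2.2]
        exact hmin c (hA hc)
    · obtain ⟨a', ha'A, ha'f⟩ := hne (proj1 a) ⟨a, ha, rfl⟩
      obtain ⟨b', hb'A, hb'f⟩ := hne (proj1 b) ⟨b, hb, rfl⟩
      refine ⟨a', ha'A, b', hb'A, ?_, ?_, ?_⟩
      · intro h; apply hp; rw [← ha'f.2, h, hb'f.2]
      · rw [hwt a' a ha'f.2, hwt b' b hb'f.2]; exact hwab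
      · intro c hc
        rw [hwt a' a ha'f.2]
        exact hmin c (hA hc)
  · rintro ⟨a, ha, b, hb, hab, hwab, hmin⟩
    refine ⟨a, hA ha, b, hA hb, hab, hwab, ?_⟩
    intro c hc
    obtain ⟨c', hc'A, hc'f⟩ := hne (proj1 c) ⟨c, hc, rfl⟩
    rw [← hwt c' c hc'f.2]
    exact hmin c' hc'A
end

section
/- Let f be a nonzero formal power series in ℂ[[x₁,…,xₙ]] and let w ∈ U_loc be a local weight vector. Then the minimum of w·α over α ∈ Supp(f) is attained at two or more distinct elements of Supp(f) if and only if the minimum of w·β over β ∈ E_w(f) is attained at two or more distinct elements of E_w(f). (In particular, the local tropical hypersurface of f decomposes over the strata of U_loc as the union of the loci determined by the sets E_w(f).) -/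
/-- The projection `π_P : ℕⁿ → ℕ^{P(w)}` onto the coordinates in the positivity set
`P(w) = {i : wᵢ > 0}` of the local weight vector `w`. -/
def projP {n : ℕ} (w : Fin n → ℝ) (α : Fin n →₀ ℕ) : {i : Fin n // 0 < w i} → ℕ :=
  fun i => α i.1

/-- `E_w(f) = {α ∈ Supp f : π_P(α) is a minimal element of π_P(Supp f)}`, with respect to
the componentwise partial order. -/
def Ew {n : ℕ} (w : Fin n → ℝ) (f : MvPowerSeries (Fin n) ℂ) : Set (Fin n →₀ ℕ) :=
  {α ∈ Supp f | ∀ β ∈ Supp f, projP w β ≤ projP w α → projP w β = projP w α}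

private lemma wt_le_of_projP_le {n : ℕ} {w : Fin n → ℝ} (hw : ∀ i, 0 ≤ w i)
    {α β : Fin n →₀ ℕ} (h : projP w β ≤ projP w α) : wt w β ≤ wt w α := by
  apply Finset.sum_le_sum
  intro i _
  rcases (hw i).lt_or_eq with hi | hi
  · exact mul_le_mul_of_nonneg_left (Nat.cast_le.2 (h ⟨i, hi⟩)) (hw i)
  · simp [← hi]

private lemma wt_lt_of_projP_lt {n : ℕ} {w : Fin n → ℝ} (hw : ∀ i, 0 ≤ w i)
    {α β : Fin n →₀ ℕ} (hle : projP w β ≤ projP w α) (hne : projP w β ≠ projP w α) :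
    wt w β < wt w α := by
  obtain ⟨j, hj⟩ : ∃ j, projP w β j ≠ projP w α j := by
    by_contra h; push_neg at h; exact hne (funext h)
  apply Finset.sum_lt_sum
  · intro i _
    rcases (hw i).lt_or_eq with hi | hi
    · exact mul_le_mul_of_nonneg_left (Nat.cast_le.2 (hle ⟨i, hi⟩)) (hw i)
    · simp [← hi]
  · refine ⟨j.1, Finset.mem_univ _, ?_⟩
    have hlt : β j.1 < α j.1 := lt_of_le_of_ne (hle j) hj
    exact mul_lt_mul_of_pos_left (Nat.cast_lt.2 hlt) j.2

private lemma exists_Ew_le {n : ℕ} {w : Fin n → ℝ} (f : MvPowerSeries (Fin n) ℂ) :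
    ∀ N (α : Fin n →₀ ℕ), (∑ i : {i : Fin n // 0 < w i}, α i.1) = N → α ∈ Supp f →
      ∃ e ∈ Ew w f, projP w e ≤ projP w α := by
  intro N
  induction N using Nat.strong_induction_on with
  | _ N ih =>
    intro α hN hα
    by_cases hE : α ∈ Ew w f
    · exact ⟨α, hE, le_refl _⟩
    · have hex : ∃ β ∈ Supp f, projP w β ≤ projP w α ∧ projP w β ≠ projP w α := by
        simp only [Ew, Set.mem_setOf_eq] at hE
        push_neg at hE
        obtain ⟨β, h1, h2, h3⟩ := hE hα
        exact ⟨β, h1, h2, h3⟩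
      obtain ⟨β, hβ, hle, hne⟩ := hex
      obtain ⟨j, hj⟩ : ∃ j, projP w β j ≠ projP w α j := by
        by_contra h; push_neg at h; exact hne (funext h)
      have hlt : (∑ i : {i : Fin n // 0 < w i}, β i.1) < N := by
        rw [← hN]
        apply Finset.sum_lt_sum
        · intro i _; exact hle i
        · exact ⟨j, Finset.mem_univ _, lt_of_le_of_ne (hle j) hj⟩
      obtain ⟨e, he, hle'⟩ := ih _ hlt β rfl hβ
      exact ⟨e, he, hle'.trans hle⟩

/-- For a nonzero `f ∈ ℂ[[x₁,…,xₙ]]` and a local weight vector `w ∈ U_loc`: the minimum of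
`w·α` over `Supp f` is attained at two or more distinct elements of `Supp f` iff the
minimum of `w·β` over `E_w(f)` is attained at two or more distinct elements of `E_w(f)`. -/
theorem minAttainedTwice_supp_iff_Ew
    (n : ℕ) (hn : 1 ≤ n) (f : MvPowerSeries (Fin n) ℂ) (hf : f ≠ 0)
    (w : Fin n → ℝ) (hw : ∀ i, 0 ≤ w i) :
    MinAttainedTwice w (Supp f) ↔ MinAttainedTwice w (Ew w f) := by
  constructor
  · rintro ⟨a, ha, b, hb, hab, heq, hmin⟩
    -- any wt-minimizer of Supp is in Ew
    have key : ∀ c ∈ Supp f, (∀ d ∈ Supp f, wt w c ≤ wt w d) → c ∈ Ew w f := by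
      intro c hc hcmin
      refine ⟨hc, fun β hβ hle => ?_⟩
      by_contra hne
      exact absurd (hcmin β hβ) (not_le.2 (wt_lt_of_projP_lt hw hle hne))
    have hbmin : ∀ d ∈ Supp f, wt w b ≤ wt w d := fun d hd => heq ▸ hmin d hd
    exact ⟨a, key a ha hmin, b, key b hb hbmin, hab, heq,
      fun c hc => hmin c hc.1⟩
  · rintro ⟨a, ha, b, hb, hab, heq, hmin⟩
    refine ⟨a, ha.1, b, hb.1, hab, heq, fun c hc => ?_⟩
    obtain ⟨e, he, hle⟩ := exists_Ew_le f _ c rfl hc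
    exact (hmin e he).trans (wt_le_of_projP_le hw hle)
end

section
/- Let I be an ideal of ℂ[[x₁,…,xₙ]] and let w ∈ ℝⁿ satisfy wᵢ > 0 for all i. If the ideal in_w(I) of the polynomial ring ℂ[x₁,…,xₙ] generated by the initial forms in_w(f) of all nonzero f ∈ I contains a nonzero monomial c·x^α (c ∈ ℂ, c ≠ 0, α ∈ ℕⁿ), then there exists a nonzero f ∈ I such that in_w(f) is a monomial, i.e. the minimum of w·β over β ∈ Supp(f) is attained at exactly one β. -/
open Classical in
/-- `p` is the initial form `in_w(f)` of the power series `f`: the polynomial whose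
coefficient at `β` equals the coefficient of `f` at `β` if `β ∈ Supp f` has minimal
`w`-weight among `Supp f`, and `0` otherwise. -/
def IsInitialForm {n : ℕ} (w : Fin n → ℝ) (f : MvPowerSeries (Fin n) ℂ)
    (p : MvPolynomial (Fin n) ℂ) : Prop :=
  ∀ β : Fin n →₀ ℕ,
    MvPolynomial.coeff β p =
      if β ∈ Supp f ∧ ∀ γ ∈ Supp f, wt w β ≤ wt w γ then MvPowerSeries.coeff β f else 0

lemma wt_add {n : ℕ} (w : Fin n → ℝ) (γ δ : Fin n →₀ ℕ) :
    wt w (γ + δ) = wt w γ + wt w δ := by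
  unfold wt
  rw [← Finset.sum_add_distrib]
  refine Finset.sum_congr rfl fun i _ => ?_
  simp [Finsupp.add_apply, mul_add]

lemma wt_nonneg {n : ℕ} {w : Fin n → ℝ} (hw : ∀ i, 0 < w i) (β : Fin n →₀ ℕ) :
    0 ≤ wt w β :=
  Finset.sum_nonneg fun i _ => mul_nonneg (hw i).le (Nat.cast_nonneg _)

lemma exists_min_wt {n : ℕ} (w : Fin n → ℝ) (hw : ∀ i, 0 < w i)
    (f : MvPowerSeries (Fin n) ℂ) (hf : f ≠ 0) :
    ∃ β ∈ Supp f, ∀ γ ∈ Supp f, wt w β ≤ wt w γ := by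
  have hne : ∃ β, β ∈ Supp f := by
    by_contra h
    push_neg at h
    exact hf (MvPowerSeries.ext fun β => by simpa [Supp] using h β)
  obtain ⟨β₁, hβ₁⟩ := hne
  set B : Fin n →₀ ℕ := Finsupp.equivFunOnFinite.symm fun i => ⌈wt w β₁ / w i⌉₊ with hB
  have hsub : {β | β ∈ Supp f ∧ wt w β ≤ wt w β₁} ⊆ ↑(Finset.Iic B) := by
    intro β hβ
    simp only [Finset.coe_Iic, Set.mem_Iic]
    rw [Finsupp.le_def]
    intro i
    have h1 : w i * (β i : ℝ) ≤ wt w β := by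
      refine Finset.single_le_sum (fun j _ => mul_nonneg (hw j).le (Nat.cast_nonneg _)) ?_
      exact Finset.mem_univ i
    have h2 : (β i : ℝ) ≤ wt w β₁ / w i := by
      rw [le_div_iff₀ (hw i)]
      calc (β i : ℝ) * w i = w i * (β i : ℝ) := mul_comm _ _
        _ ≤ wt w β := h1
        _ ≤ wt w β₁ := hβ.2
    have h3 : (β i : ℝ) ≤ (⌈wt w β₁ / w i⌉₊ : ℝ) := le_trans h2 (Nat.le_ceil _)
    have h4 : β i ≤ ⌈wt w β₁ / w i⌉₊ := by exact_mod_cast h3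
    simpa [hB] using h4
  have hfin : {β | β ∈ Supp f ∧ wt w β ≤ wt w β₁}.Finite :=
    Set.Finite.subset (Finset.Iic B).finite_toSet hsub
  obtain ⟨β₀, hβ₀S, hmin⟩ := Set.exists_min_image _ (wt w) hfin ⟨β₁, hβ₁, le_refl _⟩
  refine ⟨β₀, hβ₀S.1, fun γ hγ => ?_⟩
  by_cases h : wt w γ ≤ wt w β₁
  · exact hmin γ ⟨hγ, h⟩
  · exact le_trans (hmin β₁ ⟨hβ₁, le_refl _⟩) (le_of_not_ge h)

/-- Let `I` be an ideal of `ℂ[[x₁,…,xₙ]]` and `w` strictly positive. If the ideal `in_w(I)`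
of `ℂ[x₁,…,xₙ]` generated by the initial forms of all nonzero elements of `I` contains a
nonzero monomial, then there is a nonzero `f ∈ I` whose initial form is a monomial, i.e.
the minimum of `w·β` over `β ∈ Supp f` is attained at exactly one `β`. -/
theorem exists_monomial_initial_form_of_initial_ideal_contains_monomial
    (n : ℕ) (hn : 1 ≤ n) (I : Ideal (MvPowerSeries (Fin n) ℂ))
    (w : Fin n → ℝ) (hw : ∀ i, 0 < w i)
    (c : ℂ) (hc : c ≠ 0) (α : Fin n →₀ ℕ)
    (hmem : MvPolynomial.monomial α c ∈
      Ideal.span {p : MvPolynomial (Fin n) ℂ | ∃ f ∈ I, f ≠ 0 ∧ IsInitialForm w f p}) :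
    ∃ f ∈ I, f ≠ 0 ∧
      ∃! β : Fin n →₀ ℕ, β ∈ Supp f ∧ ∀ γ ∈ Supp f, wt w β ≤ wt w γ := by
  classical
  obtain ⟨d, hdsub, hsum⟩ := Submodule.mem_span_set.mp hmem
  have hch : ∀ p : MvPolynomial (Fin n) ℂ, ∃ g : MvPowerSeries (Fin n) ℂ, ∃ β : Fin n →₀ ℕ,
      p ∈ d.support → g ∈ I ∧ g ≠ 0 ∧ IsInitialForm w g p ∧ β ∈ Supp g ∧
        ∀ γ ∈ Supp g, wt w β ≤ wt w γ := by
    intro p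
    by_cases hp : p ∈ d.support
    · obtain ⟨g, hgI, hg0, hgin⟩ := hdsub hp
      obtain ⟨β, hβ, hβmin⟩ := exists_min_wt w hw g hg0
      exact ⟨g, β, fun _ => ⟨hgI, hg0, hgin, hβ, hβmin⟩⟩
    · exact ⟨0, 0, fun h => absurd h hp⟩
  choose g β₀ hkey using hch
  set q : MvPolynomial (Fin n) ℂ → MvPolynomial (Fin n) ℂ :=
    fun p => AddMonoidAlgebra.ofCoeff (Finsupp.filter (fun γ => wt w γ = wt w α - wt w (β₀ p)) (AddMonoidAlgebra.coeff (d p))) with hqdef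
  have hqcoeff : ∀ p γ, MvPolynomial.coeff γ (q p) =
      if wt w γ = wt w α - wt w (β₀ p) then MvPolynomial.coeff γ (d p) else 0 :=
    fun p γ => Finsupp.filter_apply _ _ _
  set F : MvPowerSeries (Fin n) ℂ :=
    ∑ p ∈ d.support, (↑(q p) : MvPowerSeries (Fin n) ℂ) * g p with hFdef
  have hFI : F ∈ I := Ideal.sum_mem I fun p hp => Ideal.mul_mem_left I _ (hkey p hp).1
  have hFcoeff : ∀ β, MvPowerSeries.coeff β F =
      ∑ p ∈ d.support, ∑ x ∈ Finset.HasAntidiagonal.antidiagonal β,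
        MvPolynomial.coeff x.1 (q p) * MvPowerSeries.coeff x.2 (g p) := by
    intro β
    rw [hFdef, map_sum]
    refine Finset.sum_congr rfl fun p hp => ?_
    rw [MvPowerSeries.coeff_mul]
    exact Finset.sum_congr rfl fun x hx => by rw [MvPolynomial.coeff_coe]
  have hMcoeff : ∀ β, MvPolynomial.coeff β (MvPolynomial.monomial α c) =
      ∑ p ∈ d.support, ∑ x ∈ Finset.HasAntidiagonal.antidiagonal β,
        MvPolynomial.coeff x.1 (d p) * MvPolynomial.coeff x.2 p := by
    intro β
    rw [← hsum, Finsupp.sum, MvPolynomial.coeff_sum]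
    exact Finset.sum_congr rfl fun p hp => by rw [smul_eq_mul, MvPolynomial.coeff_mul]
  have hlow : ∀ β, wt w β < wt w α → MvPowerSeries.coeff β F = 0 := by
    intro β hβ
    rw [hFcoeff]
    refine Finset.sum_eq_zero fun p hp => Finset.sum_eq_zero fun x hx => ?_
    rcases eq_or_ne (MvPolynomial.coeff x.1 (q p)) 0 with h1 | h1
    · rw [h1, zero_mul]
    rcases eq_or_ne (MvPowerSeries.coeff x.2 (g p)) 0 with h2 | h2
    · rw [h2, mul_zero]
    exfalso
    have hx1 : wt w x.1 = wt w α - wt w (β₀ p) := by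
      by_contra h
      exact h1 (by rw [hqcoeff, if_neg h])
    have hx2 : wt w (β₀ p) ≤ wt w x.2 := (hkey p hp).2.2.2.2 x.2 h2
    have hxs : x.1 + x.2 = β := Finset.HasAntidiagonal.mem_antidiagonal.mp hx
    have hadd := wt_add w x.1 x.2
    rw [hxs] at hadd
    linarith
  have hhigh : ∀ β, wt w β = wt w α → MvPowerSeries.coeff β F =
      MvPolynomial.coeff β (MvPolynomial.monomial α c) := by
    intro β hβ
    rw [hFcoeff, hMcoeff]
    refine Finset.sum_congr rfl fun p hp => Finset.sum_congr rfl fun x hx => ?_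
    have hxs : x.1 + x.2 = β := Finset.HasAntidiagonal.mem_antidiagonal.mp hx
    have hadd : wt w x.1 + wt w x.2 = wt w α := by
      rw [← hβ, ← hxs]; exact (wt_add w x.1 x.2).symm
    obtain ⟨-, -, hinit, hβ₀, hmin⟩ := hkey p hp
    by_cases h1 : wt w x.1 = wt w α - wt w (β₀ p)
    · have hx2 : wt w x.2 = wt w (β₀ p) := by linarith
      rw [hqcoeff p x.1, if_pos h1]
      congr 1
      rw [hinit x.2]
      by_cases h2 : x.2 ∈ Supp (g p)
      · rw [if_pos ⟨h2, fun γ hγ => by rw [hx2]; exact hmin γ hγ⟩]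
      · rw [if_neg (fun hcond => h2 hcond.1)]
        exact not_not.mp (by simpa [Supp] using h2)
    · rw [hqcoeff p x.1, if_neg h1, zero_mul]
      have hp2 : MvPolynomial.coeff x.2 p = 0 := by
        rw [hinit x.2]
        apply if_neg
        rintro ⟨h2, hmin2⟩
        apply h1
        have e1 : wt w x.2 ≤ wt w (β₀ p) := hmin2 (β₀ p) hβ₀
        have e2 : wt w (β₀ p) ≤ wt w x.2 := hmin x.2 h2
        linarith
      rw [hp2, mul_zero]
  have hα : MvPowerSeries.coeff α F = c := by
    rw [hhigh α rfl, MvPolynomial.coeff_monomial, if_pos rfl]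
  have hge : ∀ γ ∈ Supp F, wt w α ≤ wt w γ := by
    intro γ hγ
    by_contra h
    exact hγ (hlow γ (lt_of_not_ge h))
  refine ⟨F, hFI, fun h0 => hc (by rw [← hα, h0, map_zero]), ?_⟩
  have hαS : α ∈ Supp F := by
    show MvPowerSeries.coeff α F ≠ 0
    rw [hα]; exact hc
  refine ⟨α, ⟨hαS, hge⟩, ?_⟩
  rintro β ⟨hβS, hβmin⟩
  have hβA : wt w β = wt w α := le_antisymm (hβmin α hαS) (hge β hβS)
  by_contra hβα
  have hF0 := hhigh β hβA
  rw [MvPolynomial.coeff_monomial, if_neg (fun h => hβα h.symm)] at hF0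
  exact hβS hF0
end
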